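/- Integral Griesmer-type bound: if there is an additive code over F_{q^h} of length n, F_q-dimension r = kh (k ∈ ℕ), and minimum distance d, and m is such that q^{(m-2)h} < d ≤ q^{(m-1)h} ≤ q^r, then n ≥ k + d - m + ⌈Σ_{j=1}^{m-1} d/q^{jh}⌉. -/

import Mathlib

theorem arith_aux (d T bb NN z nn : ℚ) (M : ℕ) (hbb : 2 ≤ bb) (hNN1 : 1 ≤ NN)
    (hNNM : bb ^ M ≤ NN) (hd0 : 0 ≤ d)
    (hgeom : T * ((bb - 1) * bb ^ M) = d * bb * (bb ^ M - 1))
    (hmain : bb * ((NN - 1) * d) ≤ (nn - z) * (bb * NN - NN)) : T ≤ nn - z := by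
  have hbM0 : (0 : ℚ) < bb ^ M := by positivity
  have hfac : (0 : ℚ) < (bb - 1) * bb ^ M * NN :=
    mul_pos (mul_pos (by linarith) hbM0) (by linarith)
  have e1 : T * ((bb - 1) * bb ^ M * NN) = (d * bb * (bb ^ M - 1)) * NN := by
    rw [← mul_assoc, hgeom]
  have aux : (0 : ℚ) ≤ d * bb * (NN - bb ^ M) :=
    mul_nonneg (mul_nonneg hd0 (by linarith)) (by linarith)
  have e2 : (d * bb * (bb ^ M - 1)) * NN ≤ ((NN - 1) * d * bb) * bb ^ M := by nlinarith [aux]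
  have e3 : ((NN - 1) * d * bb) * bb ^ M ≤ ((nn - z) * (bb * NN - NN)) * bb ^ M := by
    apply mul_le_mul_of_nonneg_right _ (le_of_lt hbM0)
    nlinarith [hmain]
  have e4 : ((nn - z) * (bb * NN - NN)) * bb ^ M = (nn - z) * ((bb - 1) * bb ^ M * NN) := by ring
  have key : T * ((bb - 1) * bb ^ M * NN) ≤ (nn - z) * ((bb - 1) * bb ^ M * NN) := by
    rw [e1, ← e4]
    exact le_trans e2 e3
  exact le_of_mul_le_mul_right key hfac

theorem geom_aux (b : ℚ) (hb0 : b ≠ 0) (d : ℚ) (M : ℕ) :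
    (∑ j ∈ Finset.range M, d / b ^ j) * ((b - 1) * b ^ M) = d * b * (b ^ M - 1) := by
  induction M with
  | zero => simp
  | succ s ih =>
    rw [Finset.sum_range_succ, pow_succ]
    have e : d / b ^ s * b ^ s = d := div_mul_cancel₀ _ (pow_ne_zero _ hb0)
    linear_combination b * ih + ((b - 1) * b) * e

theorem ker_rank {Fq K : Type} [Field Fq] [Fintype Fq] [Field K] [Fintype K]
    [Algebra Fq K] {n : ℕ} (C : Submodule Fq (Fin n → K)) (i : Fin n) :
    Module.finrank Fq C ≤ Module.finrank Fq K +
      Module.finrank Fq (LinearMap.ker ((LinearMap.proj i : (Fin n → K) →ₗ[Fq] K).comp C.subtype)) := by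
  have h1 := LinearMap.finrank_range_add_finrank_ker
    ((LinearMap.proj i : (Fin n → K) →ₗ[Fq] K).comp C.subtype)
  have h2 := Submodule.finrank_le
    (LinearMap.range ((LinearMap.proj i : (Fin n → K) →ₗ[Fq] K).comp C.subtype))
  omega

theorem griesmer_key {Fq K : Type} [Field Fq] [Fintype Fq] [Field K] [Fintype K]
    [DecidableEq K] [Algebra Fq K] (q h d M : ℕ)
    (hq : Fintype.card Fq = q) (hK : Fintype.card K = q ^ h) :
    ∀ (t n : ℕ) (C : Submodule Fq (Fin n → K)) (Z : Finset (Fin n)),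
      (∀ c ∈ C, ∀ i ∈ Z, c i = 0) →
      (M + t) * h ≤ Module.finrank Fq C →
      (∀ u ∈ C, u ≠ 0 → d ≤ hammingNorm u) →
      (Z.card : ℚ) + t + ∑ j ∈ Finset.range M, (d : ℚ) / ((q : ℚ) ^ h) ^ j ≤ n := by
  have hq2 : 2 ≤ q := hq ▸ Fintype.one_lt_card
  have hh1 : 1 ≤ h := by
    rcases Nat.eq_zero_or_pos h with h0 | h1
    · exfalso
      rw [h0, pow_zero] at hK
      have := Fintype.one_lt_card (α := K)
      omega
    · exact h1
  have hfK : Module.finrank Fq K = h := by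
    have hc := Module.card_eq_pow_finrank (K := Fq) (V := K)
    rw [hq, hK] at hc
    exact (Nat.pow_right_injective hq2 hc.symm)
  intro t
  induction t with
  | zero =>
    intro n C Z hZ hrank hmin
    haveI : Fintype C := Fintype.ofFinite C
    set N := Fintype.card C with hN
    have hNcard : N = q ^ Module.finrank Fq C := by
      rw [hN, Module.card_eq_pow_finrank (K := Fq) (V := C), hq]
    -- per-coordinate zero count
    have hKi : ∀ i : Fin n, N ≤ q ^ h *
        ∑ c : C, (if (c : Fin n → K) i = 0 then 1 else 0) := by
      intro i
      set f : C →ₗ[Fq] K := (LinearMap.proj i : (Fin n → K) →ₗ[Fq] K).comp C.subtype with hf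
      haveI : Fintype (LinearMap.ker f) := Fintype.ofFinite _
      have hsub : (∑ c : C, (if (c : Fin n → K) i = 0 then 1 else 0))
          = Fintype.card (LinearMap.ker f) := by
        rw [Fintype.card_congr (Equiv.subtypeEquivRight
          (fun c => (LinearMap.mem_ker (f := f)).symm) :
            {c : C // c ∈ LinearMap.ker f} ≃ {c : C // f c = 0})]
        rw [Fintype.card_subtype, Finset.card_filter]
        rfl
      have hkercard : Fintype.card (LinearMap.ker f) = q ^ Module.finrank Fq (LinearMap.ker f) := by
        rw [Module.card_eq_pow_finrank (K := Fq) (V := LinearMap.ker f), hq]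
      rw [hsub, hkercard, hNcard, ← pow_add]
      apply Nat.pow_le_pow_right (by omega)
      have hkr := ker_rank C i
      rw [← hf, hfK] at hkr
      omega
    -- lower bound on total weight
    have hlow : (N - 1) * d ≤ ∑ c : C, hammingNorm (c : Fin n → K) := by
      have hfilt : (Finset.univ.filter (fun c : C => c ≠ 0)).card = N - 1 := by
        rw [Finset.filter_ne' Finset.univ (0 : C), Finset.card_erase_of_mem (Finset.mem_univ _),
          Finset.card_univ]
      calc (N - 1) * d = ∑ _c ∈ Finset.univ.filter (fun c : C => c ≠ 0), d := by
              rw [Finset.sum_const, hfilt, smul_eq_mul]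
        _ ≤ ∑ c ∈ Finset.univ.filter (fun c : C => c ≠ 0), hammingNorm (c : Fin n → K) := by
              apply Finset.sum_le_sum
              intro c hc
              rw [Finset.mem_filter] at hc
              exact hmin c c.2 (by simpa using hc.2)
        _ ≤ ∑ c : C, hammingNorm (c : Fin n → K) :=
              Finset.sum_le_sum_of_subset (Finset.filter_subset _ _)
    -- rewrite total weight as column sums
    have hcol : ∑ c : C, hammingNorm (c : Fin n → K)
        = ∑ i : Fin n, (N - ∑ c : C, (if (c : Fin n → K) i = 0 then 1 else 0)) := by
      have h1 : ∑ c : C, hammingNorm (c : Fin n → K)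
          = ∑ i : Fin n, ∑ c : C, (if (c : Fin n → K) i ≠ 0 then 1 else 0) := by
        rw [Finset.sum_comm]
        refine Finset.sum_congr rfl fun c _ => ?_
        rw [hammingNorm, Finset.card_filter]
      rw [h1]
      refine Finset.sum_congr rfl fun i _ => ?_
      have h2 : (∑ c : C, (if (c : Fin n → K) i ≠ 0 then 1 else 0))
          + (∑ c : C, (if (c : Fin n → K) i = 0 then 1 else 0)) = N := by
        rw [← Finset.sum_add_distrib]
        have hterm : ∀ c : C, (if (c : Fin n → K) i ≠ 0 then 1 else 0)
            + (if (c : Fin n → K) i = 0 then 1 else 0) = 1 := by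
          intro c
          by_cases hc : (c : Fin n → K) i = 0 <;> simp [hc]
        rw [Finset.sum_congr rfl (fun c _ => hterm c), Finset.sum_const, Finset.card_univ,
          smul_eq_mul, mul_one]
      omega
    -- upper bound on column sums
    have hup : q ^ h * ∑ i : Fin n, (N - ∑ c : C, (if (c : Fin n → K) i = 0 then 1 else 0))
        ≤ (n - Z.card) * (q ^ h * N - N) := by
      rw [Finset.mul_sum]
      calc ∑ i : Fin n, q ^ h * (N - ∑ c : C, (if (c : Fin n → K) i = 0 then 1 else 0))
          ≤ ∑ i : Fin n, (if i ∈ Z then 0 else (q ^ h * N - N)) := by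
            apply Finset.sum_le_sum
            intro i _
            by_cases hiZ : i ∈ Z
            · have hone : ∀ c : C, (if (c : Fin n → K) i = 0 then 1 else 0) = 1 := fun c => by
                rw [if_pos (hZ c c.2 i hiZ)]
              rw [Finset.sum_congr rfl (fun c _ => hone c), Finset.sum_const, Finset.card_univ,
                smul_eq_mul, mul_one]
              simp [hiZ, hN]
            · rw [if_neg hiZ]
              have h3 := hKi i
              have h5 : q ^ h * (N - ∑ c : C, (if (c : Fin n → K) i = 0 then 1 else 0))
                  = q ^ h * N - q ^ h * ∑ c : C, (if (c : Fin n → K) i = 0 then 1 else 0) :=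
                Nat.mul_sub _ _ _
              rw [h5]
              exact Nat.sub_le_sub_left h3 _
        _ = (n - Z.card) * (q ^ h * N - N) := by
            rw [Finset.sum_ite, Finset.sum_const_zero, Finset.sum_const, zero_add, smul_eq_mul]
            have hcompl : Finset.univ.filter (fun i : Fin n => ¬ i ∈ Z) = Zᶜ := by
              ext x; simp
            rw [hcompl, Finset.card_compl, Fintype.card_fin]
    -- combine in ℕ
    have hmain : q ^ h * ((N - 1) * d) ≤ (n - Z.card) * (q ^ h * N - N) := by
      calc q ^ h * ((N - 1) * d) ≤ q ^ h * ∑ c : C, hammingNorm (c : Fin n → K) :=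
            Nat.mul_le_mul_left _ hlow
        _ = q ^ h * ∑ i : Fin n, (N - ∑ c : C, (if (c : Fin n → K) i = 0 then 1 else 0)) := by
            rw [hcol]
        _ ≤ _ := hup
    -- numeric facts and cast to ℚ
    have hN1 : 1 ≤ N := Fintype.card_pos
    have hZn : Z.card ≤ n := by simpa using Finset.card_le_univ Z
    have hNM : (q ^ h) ^ M ≤ N := by
      rw [hNcard, ← pow_mul]
      exact Nat.pow_le_pow_right (by omega) (by rw [mul_comm]; simpa using hrank)
    have hNle : N ≤ q ^ h * N := Nat.le_mul_of_pos_left N (by positivity)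
    have hQmain : (q : ℚ) ^ h * (((N : ℚ) - 1) * d) ≤ ((n : ℚ) - Z.card) * ((q : ℚ) ^ h * N - N) := by
      have hc := (Nat.cast_le (α := ℚ)).2 hmain
      push_cast [Nat.cast_sub hN1, Nat.cast_sub hZn, Nat.cast_sub hNle] at hc
      convert hc using 2
    set T : ℚ := ∑ j ∈ Finset.range M, (d : ℚ) / ((q : ℚ) ^ h) ^ j with hT
    set bb : ℚ := (q : ℚ) ^ h with hbb
    have hqc : (2 : ℚ) ≤ (q : ℚ) := by exact_mod_cast hq2
    have hbb2 : 2 ≤ bb := by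
      rw [hbb]
      calc (2 : ℚ) ≤ (q : ℚ) := hqc
        _ ≤ (q : ℚ) ^ h := le_self_pow₀ (by linarith) (by omega)
    have hNN1 : 1 ≤ (N : ℚ) := by exact_mod_cast hN1
    have hNNM : bb ^ M ≤ (N : ℚ) := by
      rw [hbb]
      exact_mod_cast hNM
    have hd0 : (0 : ℚ) ≤ d := Nat.cast_nonneg d
    have hTle : T ≤ (n : ℚ) - Z.card :=
      arith_aux d T bb (N : ℚ) (Z.card : ℚ) (n : ℚ) M hbb2 hNN1 hNNM hd0
        (geom_aux bb (by linarith) (d : ℚ) M) hQmain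
    push_cast
    linarith
  | succ t ih =>
    intro n C Z hZ hrank hmin
    have hne : C ≠ ⊥ := by
      intro hbot
      have h0 : Module.finrank Fq C = 0 := by
        rw [hbot]
        exact finrank_bot Fq _
      rw [h0] at hrank
      have hpos : 1 ≤ (M + (t + 1)) * h := Nat.mul_pos (by omega) (by omega)
      omega
    obtain ⟨c, hcC, hc0⟩ := (Submodule.ne_bot_iff C).mp hne
    obtain ⟨i, hi⟩ : ∃ i, c i ≠ 0 := by
      by_contra hcon
      push_neg at hcon
      exact hc0 (funext hcon)
    have hiZ : i ∉ Z := fun hmem => hi (hZ c hcC i hmem)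
    set f : C →ₗ[Fq] K := (LinearMap.proj i : (Fin n → K) →ₗ[Fq] K).comp C.subtype with hf
    have hmem' : ∀ x ∈ Submodule.map C.subtype (LinearMap.ker f), x ∈ C ∧ x i = 0 := by
      rintro x ⟨y, hy, rfl⟩
      exact ⟨y.2, LinearMap.mem_ker.mp hy⟩
    have hIH := ih n (Submodule.map C.subtype (LinearMap.ker f)) (insert i Z) ?_ ?_ ?_
    · rw [Finset.card_insert_of_notMem hiZ] at hIH
      push_cast at hIH ⊢
      linarith
    · intro c' hc' j hj
      rcases Finset.mem_insert.mp hj with rfl | hjZ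
      · exact (hmem' c' hc').2
      · exact hZ c' (hmem' c' hc').1 j hjZ
    · rw [Submodule.finrank_map_subtype_eq]
      have hkr := ker_rank C i
      rw [← hf, hfK] at hkr
      have hexp : (M + (t + 1)) * h = (M + t) * h + h := by ring
      omega
    · intro u hu hu0
      exact hmin u (hmem' u hu).1 hu0



/-- Integral Griesmer-type bound: if there is an additive code over `F_{q^h}` of length `n`,
`F_q`-dimension `r = kh`, and minimum distance `d`, and `m ≥ 2` satisfies
`q^{(m-2)h} < d ≤ q^{(m-1)h} ≤ q^r`, then `n ≥ k + d - m + ⌈∑_{j=1}^{m-1} d/q^{jh}⌉`. -/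
theorem additive_griesmer_bound_integral
    (q h n r d k m : ℕ) (Fq K : Type) [Field Fq] [Fintype Fq] [Field K] [Fintype K]
    [DecidableEq K] [Algebra Fq K]
    (hq : Fintype.card Fq = q) (hK : Fintype.card K = q ^ h)
    (C : Submodule Fq (Fin n → K)) (hr : Module.finrank Fq C = r) (hrk : r = k * h)
    (hd1 : ∀ u ∈ C, u ≠ 0 → d ≤ hammingNorm u)
    (hd2 : ∃ u ∈ C, u ≠ 0 ∧ hammingNorm u = d)
    (hm2 : 2 ≤ m)
    (hm : q ^ ((m - 2) * h) < d) (hm' : d ≤ q ^ ((m - 1) * h))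
    (hm'' : q ^ ((m - 1) * h) ≤ q ^ r) :
    (n : ℤ) ≥ (k : ℤ) + (d : ℤ) - (m : ℤ) +
      ⌈∑ j ∈ Finset.Icc 1 (m - 1), (d : ℚ) / (q : ℚ) ^ (j * h)⌉ := by
  have hq2 : 2 ≤ q := hq ▸ Fintype.one_lt_card
  have hh1 : 1 ≤ h := by
    rcases Nat.eq_zero_or_pos h with h0 | h1
    · exfalso
      rw [h0, pow_zero] at hK
      have := Fintype.one_lt_card (α := K)
      omega
    · exact h1
  set M := m - 1 with hM
  have hmk : M ≤ k := by
    have hle : M * h ≤ k * h := by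
      have h1 := hm''
      rw [hrk] at h1
      exact (Nat.pow_le_pow_iff_right hq2).mp h1
    exact Nat.le_of_mul_le_mul_right hle (by omega)
  have hkey := griesmer_key q h d M hq hK (k - M) n C ∅ (by simp)
    (by
      have hMk : M + (k - M) = k := by omega
      rw [hMk, hr, hrk])
    hd1
  -- identify the two sums
  have hpow : ∀ j : ℕ, ((q : ℚ) ^ h) ^ j = (q : ℚ) ^ (j * h) := fun j => by
    rw [← pow_mul, mul_comm]
  have hS : ∑ j ∈ Finset.Icc 1 M, (d : ℚ) / (q : ℚ) ^ (j * h)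
      = ∑ i ∈ Finset.range M, (d : ℚ) / ((q : ℚ) ^ h) ^ (i + 1) := by
    rw [← Finset.Ico_add_one_right_eq_Icc, Finset.sum_Ico_eq_sum_range]
    simp only [Nat.add_sub_cancel]
    refine Finset.sum_congr rfl fun i _ => ?_
    rw [hpow, Nat.add_comm 1 i]
  have hTS : (∑ j ∈ Finset.range M, (d : ℚ) / ((q : ℚ) ^ h) ^ j) + (d : ℚ) / ((q : ℚ) ^ h) ^ M
      = (d : ℚ) + ∑ j ∈ Finset.Icc 1 M, (d : ℚ) / (q : ℚ) ^ (j * h) := by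
    rw [hS, ← Finset.sum_range_succ, Finset.sum_range_succ']
    simp
    ring
  have hdM : (d : ℚ) / ((q : ℚ) ^ h) ^ M ≤ 1 := by
    rw [div_le_one (by positivity)]
    rw [hpow]
    exact_mod_cast hm'
  have hkM : ((k - M : ℕ) : ℚ) = (k : ℚ) - (m : ℚ) + 1 := by
    rw [Nat.cast_sub hmk, hM, Nat.cast_sub (by omega : 1 ≤ m)]
    push_cast
    ring
  rw [Finset.card_empty, hkM] at hkey
  -- conclude
  have hceil : (∑ j ∈ Finset.Icc 1 M, (d : ℚ) / (q : ℚ) ^ (j * h))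
      ≤ (((n : ℤ) - (k : ℤ) - (d : ℤ) + (m : ℤ) : ℤ) : ℚ) := by
    push_cast
    linarith [hkey, hTS, hdM]
  have hle := Int.ceil_le.mpr hceil
  omega
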